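/- Let n ≥ 1, let σ > 0, let ε₀ > 0, let x̄ ∈ ℝⁿ, and let x* ∈ ℝⁿ with ‖x* − x̄‖ > ε₀. Let fᵘ : ℝⁿ → ℝ be σ-strongly convex attaining its global minimum at a point x_u* in the closed ball B̄(x̄, ε₀), let fᵏ : ℝⁿ → ℝ, and suppose g ∈ ∂fᵏ(x*) with −g ∈ ∂fᵘ(x*). Then there exists a point x_u ∈ ℝⁿ with: ‖x_u − x̄‖ = ε₀; x_u − x̄ in the linear span of {g, x* − x̄}; ⟨x_u − x̄, x* − x̄⟩ ≥ ε₀² (so the open segment from x_u to x* avoids the ball); and ⟨g, x* − x_u⟩ ≤ −σ‖x* − x_u‖², i.e., ⟨g, u(x*, x_u)⟩/‖x* − x_u‖ ≤ −σ. -/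

import Mathlib

open RealInnerProductSpace

set_option maxHeartbeats 2000000 in
/-- If `fᵘ` is σ-strongly convex with global minimizer in the closed ball
`B̄(x̄, ε₀)`, `x*` is outside the ball, `g ∈ ∂fᵏ(x*)` and `−g ∈ ∂fᵘ(x*)`, then there is a
point `x_u` on the sphere, lying in the plane through `x̄` spanned by `g` and `x* − x̄`,
with `⟨x_u − x̄, x* − x̄⟩ ≥ ε₀²` and `⟨g, x* − x_u⟩ ≤ −σ‖x* − x_u‖²`. -/
theorem statement14 {n : ℕ} (hn : 1 ≤ n) (σ : ℝ) (hσ : 0 < σ)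
    (ε₀ : ℝ) (hε₀ : 0 < ε₀)
    (xbar xstar : EuclideanSpace ℝ (Fin n)) (hxstar : ‖xstar - xbar‖ > ε₀)
    (fu fk : EuclideanSpace ℝ (Fin n) → ℝ)
    (hstrong : ∀ x y gx gy : EuclideanSpace ℝ (Fin n),
      (∀ z, fu z ≥ fu x + ⟪gx, z - x⟫) →
      (∀ z, fu z ≥ fu y + ⟪gy, z - y⟫) →
      ⟪gx - gy, x - y⟫ ≥ σ * ‖x - y‖ ^ 2)
    (xustar : EuclideanSpace ℝ (Fin n)) (hxuball : ‖xustar - xbar‖ ≤ ε₀)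
    (hmin : ∀ z, fu xustar ≤ fu z)
    (g : EuclideanSpace ℝ (Fin n))
    (hgk : ∀ z, fk z ≥ fk xstar + ⟪g, z - xstar⟫)
    (hgu : ∀ z, fu z ≥ fu xstar + ⟪-g, z - xstar⟫) :
    ∃ xu : EuclideanSpace ℝ (Fin n),
      ‖xu - xbar‖ = ε₀ ∧
      xu - xbar ∈ Submodule.span ℝ ({g, xstar - xbar} : Set (EuclideanSpace ℝ (Fin n))) ∧
      ⟪xu - xbar, xstar - xbar⟫ ≥ ε₀ ^ 2 ∧
      ⟪g, xstar - xu⟫ ≤ -(σ * ‖xstar - xu‖ ^ 2) := by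
  classical
  -- 0 is a subgradient of fu at xustar, so strong convexity gives the base inequality
  have h0 : ∀ z, fu z ≥ fu xustar + ⟪(0 : EuclideanSpace ℝ (Fin n)), z - xustar⟫ := by
    intro z
    simp only [inner_zero_left, add_zero]
    exact hmin z
  have hbase := hstrong xstar xustar (-g) 0 hgu h0
  rw [sub_zero, inner_neg_left] at hbase
  have hg1 : ⟪g, xstar - xustar⟫ ≤ -(σ * ‖xstar - xustar‖ ^ 2) := by linarith
  set V : Submodule ℝ (EuclideanSpace ℝ (Fin n)) :=
    Submodule.span ℝ ({g, xstar - xbar} : Set (EuclideanSpace ℝ (Fin n))) with hVdef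
  have hgV : g ∈ V := Submodule.subset_span (by simp)
  have hxV : xstar - xbar ∈ V := Submodule.subset_span (by simp)
  obtain ⟨q, hqV, hperp⟩ : ∃ q, q ∈ V ∧ (xustar - xbar) - q ∈ Vᗮ :=
    ⟨(V.orthogonalProjectionOnto (xustar - xbar) : EuclideanSpace ℝ (Fin n)),
      (V.orthogonalProjectionOnto (xustar - xbar)).2,
      V.sub_starProjection_mem_orthogonal (xustar - xbar)⟩
  have hperp' : ∀ w ∈ V, ⟪w, (xustar - xbar) - q⟫ = 0 := fun w hw =>
    (Submodule.mem_orthogonal V _).mp hperp w hw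
  -- ‖q‖ ≤ ε₀
  have hqv : ‖xustar - xbar‖ ^ 2 = ‖q‖ ^ 2 + ‖(xustar - xbar) - q‖ ^ 2 := by
    have h := norm_add_sq_real q ((xustar - xbar) - q)
    rw [hperp' q hqV] at h
    simpa using h
  have hqnorm : ‖q‖ ≤ ε₀ := by
    nlinarith [norm_nonneg q, norm_nonneg ((xustar - xbar) - q), norm_nonneg (xustar - xbar)]
  set d : EuclideanSpace ℝ (Fin n) := (xstar - xbar) - q with hddef
  have hdV : d ∈ V := sub_mem hxV hqV
  have hdq : d + q = xstar - xbar := by rw [hddef]; abel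
  -- abbreviations
  set A : ℝ := ‖d‖ ^ 2 with hAdef
  set b : ℝ := ⟪q, d⟫ with hbdef
  set c : ℝ := ‖q‖ ^ 2 with hcdef
  clear_value d A b c
  have hce : c ≤ ε₀ ^ 2 := by nlinarith [norm_nonneg q]
  -- A + 2b + c = ‖xstar - xbar‖²
  have hAc : A + 2 * b + c = ‖xstar - xbar‖ ^ 2 := by
    have h := norm_add_sq_real d q
    rw [hdq] at h
    have hcm := real_inner_comm d q
    linarith [h, hcm]
  -- ⟪g, d⟫ = ⟪g, xstar - xustar⟫
  have hdsplit : d = (xstar - xustar) + ((xustar - xbar) - q) := by rw [hddef]; abel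
  have hgd : ⟪g, d⟫ = ⟪g, xstar - xustar⟫ := by
    rw [hdsplit, inner_add_right, hperp' g hgV, add_zero]
  -- A ≤ ‖xstar - xustar‖²
  have hAle : A ≤ ‖xstar - xustar‖ ^ 2 := by
    have hsplit : xstar - xustar = d - ((xustar - xbar) - q) := by rw [hddef]; abel
    have h := norm_sub_sq_real d ((xustar - xbar) - q)
    rw [hperp' d hdV] at h
    rw [hsplit]
    nlinarith [norm_nonneg ((xustar - xbar) - q)]
  have hgdA : ⟪g, d⟫ ≤ -(σ * A) := by
    rw [hgd]; nlinarith
  -- A > 0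
  have hApos : 0 < A := by
    rcases eq_or_lt_of_le (norm_nonneg d) with h | h
    · exfalso
      have hd0 : d = 0 := norm_eq_zero.mp h.symm
      have hq' : xstar - xbar = q := by rw [← hdq, hd0, zero_add]
      have : ‖xstar - xbar‖ ≤ ε₀ := hq' ▸ hqnorm
      linarith
    · rw [hAdef]; exact pow_pos h 2
  have hxn : ε₀ ^ 2 < ‖xstar - xbar‖ ^ 2 := by
    exact pow_lt_pow_left₀ hxstar hε₀.le (by norm_num)
  -- quadratic data
  set D : ℝ := b ^ 2 + A * (ε₀ ^ 2 - c) with hDdef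
  clear_value D
  have hD0 : 0 ≤ D := by
    have h1 : 0 ≤ A * (ε₀ ^ 2 - c) := mul_nonneg hApos.le (by linarith)
    nlinarith [sq_nonneg b]
  set s : ℝ := Real.sqrt D with hsdef
  have hs0 : 0 ≤ s := Real.sqrt_nonneg D
  have hs2 : s ^ 2 = D := Real.sq_sqrt hD0
  have habs : |b| ≤ s := by
    rw [hsdef, ← Real.sqrt_sq_eq_abs]
    exact Real.sqrt_le_sqrt (by nlinarith [mul_nonneg hApos.le (by linarith : (0:ℝ) ≤ ε₀ ^ 2 - c)])
  have hbs : -b ≤ s := le_trans (neg_le_abs b) habs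
  have hbs2 : b ≤ s := le_trans (le_abs_self b) habs
  set t : ℝ := (-b + s) / A with htdef
  clear_value t
  have ht0 : 0 ≤ t := by
    rw [htdef]
    exact div_nonneg (by linarith) hApos.le
  have hAb : 0 < A + b := by linarith
  have hsAb : s ≤ A + b := by
    rw [hsdef]
    have h1 : D ≤ (A + b) ^ 2 := by nlinarith
    calc Real.sqrt D ≤ Real.sqrt ((A + b) ^ 2) := Real.sqrt_le_sqrt h1
      _ = A + b := Real.sqrt_sq hAb.le
  have ht1 : t ≤ 1 := by
    rw [htdef, div_le_one hApos]
    linarith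
  have hts : A * t + b = s := by
    rw [htdef]; field_simp; ring
  -- key scalar identity: the sphere equation
  have hval : c + 2 * t * b + t ^ 2 * A = ε₀ ^ 2 := by
    have h1 : A * t = s - b := by linarith
    have h3 : A * (c + 2 * t * b + t ^ 2 * A) = A * ε₀ ^ 2 := by nlinarith
    have h4 := mul_left_cancel₀ (ne_of_gt hApos) h3
    linarith
  -- the point
  refine ⟨xbar + (q + t • d), ?_, ?_, ?_, ?_⟩
  · -- norm = ε₀
    have hxu : xbar + (q + t • d) - xbar = q + t • d := by abel
    rw [hxu]
    have hnorm2 : ‖q + t • d‖ ^ 2 = c + 2 * t * b + t ^ 2 * A := by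
      have h := norm_add_sq_real q (t • d)
      rw [real_inner_smul_right, norm_smul] at h
      have habs2 : ‖t‖ ^ 2 = t ^ 2 := by rw [Real.norm_eq_abs, sq_abs]
      rw [h, mul_pow, habs2, hAdef, hbdef, hcdef]
      ring
    have h4 : ‖q + t • d‖ ^ 2 = ε₀ ^ 2 := by rw [hnorm2, hval]
    have h5 := congrArg Real.sqrt h4
    rwa [Real.sqrt_sq (norm_nonneg _), Real.sqrt_sq hε₀.le] at h5
  · -- span membership
    have hxu : xbar + (q + t • d) - xbar = q + t • d := by abel
    rw [hxu]
    exact add_mem hqV (Submodule.smul_mem V t hdV)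
  · -- inner with xstar - xbar
    have hxu : xbar + (q + t • d) - xbar = q + t • d := by abel
    rw [hxu, ← hdq]
    have hcomp : ⟪q + t • d, d + q⟫ = b + c + t * A + t * b := by
      rw [inner_add_left, inner_add_right, inner_add_right, real_inner_smul_left,
        real_inner_smul_left, real_inner_self_eq_norm_sq, real_inner_self_eq_norm_sq,
        real_inner_comm d q, hAdef, hbdef, hcdef]
      linear_combination (-1 - t) * real_inner_comm d q
    rw [hcomp]
    have hkey : b + c + t * A + t * b - ε₀ ^ 2 = (1 - t) * s := by
      linear_combination hval + (1 - t) * hts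
    have h2 : 0 ≤ (1 - t) * s := mul_nonneg (by linarith) hs0
    linarith
  · -- subgradient inequality
    have hxu : xstar - (xbar + (q + t • d)) = (1 - t) • d := by
      rw [hddef, sub_smul, one_smul]
      abel
    rw [hxu, real_inner_smul_right, norm_smul]
    have hn2 : (‖(1 - t : ℝ)‖ * ‖d‖) ^ 2 = (1 - t) ^ 2 * A := by
      rw [Real.norm_eq_abs, mul_pow, sq_abs, hAdef]
    rw [hn2]
    have h1 : (1 - t) * ⟪g, d⟫ ≤ (1 - t) * (-(σ * A)) :=
      mul_le_mul_of_nonneg_left hgdA (by linarith)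
    have h2 : 0 ≤ σ * A * ((1 - t) * t) :=
      mul_nonneg (mul_nonneg hσ.le hApos.le) (mul_nonneg (by linarith) ht0)
    nlinarith [h1, h2]
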